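/- For A ∈ L^∞_+(Ω) and B ∈ L^∞(Ω;ℂ^{d×d}) with A + B ∈ L^∞_+(Ω), the solution operators N(A), N(A+B) ∈ L(L²_⋄(Γ), H¹_⋄(Ω)) of the continuum model satisfy (id − P_A(B)) N(A+B) = N(A). Consequently, if ‖B‖ < c_A, then N(A+B) = Σ_{k=0}^∞ P_A(B)^k N(A), with the Neumann series converging in operator norm. -/

import Mathlib

/- Statement 6: `(id − P_A(B)) N(A+B) = N(A)` and, if `‖B‖ < c_A`, the Neumann
series `N(A+B) = Σ_{k=0}^∞ P_A(B)^k N(A)` converges in operator norm.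
`H` stands for `H¹_⋄(Ω)`, `K` for `L²_⋄(Γ)`, `T : H →L K` for the trace, `a` for
the family of forms `⟨·,·⟩_C`, and `coeffNorm μ B` for `‖B‖ = ess sup ‖B(x)‖₂`;
`N(A)f` is the unique solution of `⟨N(A)f, v⟩_A = ⟨f, Tv⟩_{L²(Γ)} = ⟪Tv, f⟫`. -/

open MeasureTheory Matrix

noncomputable section

def specNorm {d : ℕ} (M : Matrix (Fin d) (Fin d) ℂ) : ℝ :=
  ‖(Matrix.toEuclideanCLM (𝕜 := ℂ) M :
      EuclideanSpace ℂ (Fin d) →L[ℂ] EuclideanSpace ℂ (Fin d))‖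

def coeffNorm {d : ℕ} (μ : Measure (EuclideanSpace ℝ (Fin d)))
    (B : EuclideanSpace ℝ (Fin d) → Matrix (Fin d) (Fin d) ℂ) : ℝ :=
  essSup (fun x => specNorm (B x)) μ

theorem stmt6 {d : ℕ} (μ : Measure (EuclideanSpace ℝ (Fin d)))
    {H K : Type*} [NormedAddCommGroup H] [InnerProductSpace ℂ H] [CompleteSpace H]
    [NormedAddCommGroup K] [InnerProductSpace ℂ K] [CompleteSpace K]
    (T : H →L[ℂ] K)
    (a : (EuclideanSpace ℝ (Fin d) → Matrix (Fin d) (Fin d) ℂ) → H → H → ℂ)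
    (A B : EuclideanSpace ℝ (Fin d) → Matrix (Fin d) (Fin d) ℂ) (cA : ℝ)
    (hsub1 : ∀ D (w w' v : H), a D (w - w') v = a D w v - a D w' v)
    (hcoefadd : ∀ w v, a (A + B) w v = a A w v + a B w v)
    (hBbdd : ∀ w v, ‖a B w v‖ ≤ coeffNorm μ B * ‖w‖ * ‖v‖)
    (hcA : 0 < cA)
    (hAcoer : ∀ v : H, cA * ‖v‖ ^ 2 ≤ (a A v v).re)
    (hApBcoer : ∀ v : H, (cA - coeffNorm μ B) * ‖v‖ ^ 2 ≤ (a (A + B) v v).re)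
    -- `A + B ∈ L^∞_+(Ω)` is guaranteed by the assumption `‖B‖ < c_A`
    (hB : coeffNorm μ B < cA) (hB0 : 0 ≤ coeffNorm μ B)
    -- the solution operators and `P_A(B)`
    (NA NApB : K →L[ℂ] H) (PAB : H →L[ℂ] H)
    (hNA : ∀ f v, a A (NA f) v = (inner ℂ (T v) f : ℂ))
    (hNApB : ∀ f v, a (A + B) (NApB f) v = (inner ℂ (T v) f : ℂ))
    (hPAB : ∀ y v, a A (PAB y) v = -a B y v)
    (hPABle : ‖PAB‖ ≤ coeffNorm μ B / cA) :
    (ContinuousLinearMap.id ℂ H - PAB).comp NApB = NA ∧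
    ‖PAB‖ < 1 ∧
    Summable (fun k : ℕ => (PAB ^ k).comp NA) ∧
    NApB = ∑' k : ℕ, (PAB ^ k).comp NA := by
  -- uniqueness from coercivity
  have huniq : ∀ w w' : H, (∀ v, a A w v = a A w' v) → w = w' := by
    intro w w' h
    have h0 : a A (w - w') (w - w') = 0 := by
      rw [hsub1, h]; ring
    have hc := hAcoer (w - w')
    rw [h0] at hc
    simp only [Complex.zero_re] at hc
    have hsq : ‖w - w'‖ ^ 2 = 0 :=
      le_antisymm (by nlinarith) (sq_nonneg _)
    have hn : ‖w - w'‖ = 0 := by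
      nlinarith [norm_nonneg (w - w'), sq_abs ‖w - w'‖]
    exact sub_eq_zero.mp (norm_eq_zero.mp hn)
  -- main identity
  have h1 : (ContinuousLinearMap.id ℂ H - PAB).comp NApB = NA := by
    ext f
    apply huniq
    intro v
    have : ((ContinuousLinearMap.id ℂ H - PAB).comp NApB) f
        = NApB f - PAB (NApB f) := rfl
    rw [this, hsub1, hPAB, hNA, sub_neg_eq_add, ← hcoefadd, hNApB]
  have hlt : ‖PAB‖ < 1 := lt_of_le_of_lt hPABle ((div_lt_one hcA).mpr hB)
  -- Neumann series
  have hsumP : Summable (fun k : ℕ => PAB ^ k) :=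
    summable_geometric_of_norm_lt_one hlt
  let φ : (H →L[ℂ] H) →L[ℂ] (K →L[ℂ] H) :=
    (ContinuousLinearMap.compL ℂ K H H).flip NA
  have hφ : ∀ g : H →L[ℂ] H, φ g = g.comp NA := fun g => rfl
  have hsum : Summable (fun k : ℕ => (PAB ^ k).comp NA) := by
    exact hsumP.map φ φ.continuous
  refine ⟨h1, hlt, hsum, ?_⟩
  -- invertibility of 1 - PAB
  let u : (H →L[ℂ] H)ˣ := Units.oneSub PAB hlt
  have huval : (u : H →L[ℂ] H) = ContinuousLinearMap.id ℂ H - PAB := by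
    simp [u, Units.oneSub, ContinuousLinearMap.one_def]
  have huinv : ((u⁻¹ : (H →L[ℂ] H)ˣ) : H →L[ℂ] H) = ∑' k : ℕ, PAB ^ k := rfl
  have key : NApB = ((u⁻¹ : (H →L[ℂ] H)ˣ) : H →L[ℂ] H).comp NA := by
    rw [← h1, ← huval]
    ext f
    simp [ContinuousLinearMap.comp_apply]
    have : ((u⁻¹ : (H →L[ℂ] H)ˣ) : H →L[ℂ] H) ((u : H →L[ℂ] H) (NApB f))
        = (((u⁻¹ : (H →L[ℂ] H)ˣ) * u : (H →L[ℂ] H)ˣ) : H →L[ℂ] H) (NApB f) := rfl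
    rw [this, inv_mul_cancel]
    simp
  rw [key, huinv]
  have : (∑' k : ℕ, PAB ^ k).comp NA = φ (∑' k : ℕ, PAB ^ k) := rfl
  rw [this, φ.map_tsum hsumP]
  exact tsum_congr fun k => hφ _

end
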